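/- Let (𝔤, ω) be a symplectic Lie algebra with product xy on 𝔤 defined by ω(xy,z) = -ω(y,[x,z]). Then the product on 𝔤 × 𝔤* defined by (x,α)(y,β) := (xy, ad*_x β) is left symmetric, and its commutator equals the semidirect product Lie bracket [(x,α),(y,β)] = ([x,y], ad*_x β - ad*_y α) of 𝔤 ⋉_{ad*} 𝔤*. -/
import Mathlib


/-- The coadjoint action of `x : L` on the dual: `⟨coad x α, y⟩ = -⟨α, [x,y]⟩`. -/
noncomputable def coad {L : Type*} [LieRing L] [LieAlgebra ℝ L]
    (x : L) (α : Module.Dual ℝ L) : Module.Dual ℝ L :=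
  -(α ∘ₗ (LieAlgebra.ad ℝ L x))

/-- The product `(x,α)(y,β) = (xy, ad*_x β)` on `𝔤 × 𝔤*`. -/
noncomputable def sprod {L : Type*} [LieRing L] [LieAlgebra ℝ L]
    (p : L →ₗ[ℝ] L →ₗ[ℝ] L) (u v : L × Module.Dual ℝ L) : L × Module.Dual ℝ L :=
  (p u.1 v.1, coad u.1 v.2)

lemma coad_apply {L : Type*} [LieRing L] [LieAlgebra ℝ L]
    (x : L) (α : Module.Dual ℝ L) (y : L) : coad x α y = -(α ⁅x, y⁆) := by
  simp [coad, LieAlgebra.ad_apply]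

/-- for a symplectic Lie algebra `(𝔤, ω)` with product `xy` given by
`ω(xy,z) = -ω(y,[x,z])`, the product `(x,α)(y,β) = (xy, ad*_x β)` on `𝔤 × 𝔤*` is left
symmetric and its commutator is the semidirect product bracket of `𝔤 ⋉_{ad*} 𝔤*`. -/
theorem stmt13 {L : Type*} [LieRing L] [LieAlgebra ℝ L] [FiniteDimensional ℝ L]
    (ω : L →ₗ[ℝ] Module.Dual ℝ L)
    (hskew : ∀ x y : L, ω x y = - ω y x)
    (hnondeg : ∀ x : L, ω x = 0 → x = 0)
    (hclosed : ∀ x y z : L, ω ⁅x, y⁆ z + ω ⁅y, z⁆ x + ω ⁅z, x⁆ y = 0)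
    (p : L →ₗ[ℝ] L →ₗ[ℝ] L)
    (hp : ∀ x y z : L, ω (p x y) z = -(ω y ⁅x, z⁆)) :
    (∀ u v w : L × Module.Dual ℝ L,
      sprod p (sprod p u v) w - sprod p u (sprod p v w)
        = sprod p (sprod p v u) w - sprod p v (sprod p u w)) ∧
    (∀ u v : L × Module.Dual ℝ L,
      sprod p u v - sprod p v u = (⁅u.1, v.1⁆, coad u.1 v.2 - coad v.1 u.2)) := by
  -- key symplectic identity
  have key : ∀ x y z : L, ω ⁅x, y⁆ z = ω x ⁅y, z⁆ - ω y ⁅x, z⁆ := by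
    intro x y z
    have h := hclosed x y z
    have h1 : ω ⁅y, z⁆ x = - ω x ⁅y, z⁆ := hskew _ _
    have hz : (⁅z, x⁆ : L) = -⁅x, z⁆ := (lie_skew z x).symm
    rw [hz, map_neg, LinearMap.neg_apply, h1, hskew ⁅x, z⁆ y] at h
    linarith
  -- commutator of p is the Lie bracket
  have hcomm : ∀ x y : L, p x y - p y x = ⁅x, y⁆ := by
    intro x y
    have h0 : ω (p x y - p y x - ⁅x, y⁆) = 0 := by
      ext z
      simp only [map_sub, LinearMap.sub_apply, LinearMap.zero_apply, hp, key x y z]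
      ring
    exact sub_eq_zero.mp (hnondeg _ h0)
  -- left symmetry of p on L
  have hlsa : ∀ x y z : L,
      p (p x y) z - p x (p y z) = p (p y x) z - p y (p x z) := by
    intro x y z
    have h0 : ω (p (p x y) z - p x (p y z) - (p (p y x) z - p y (p x z))) = 0 := by
      ext w
      have e1 : ω (p (p x y) z) w = -(ω z ⁅p x y, w⁆) := hp _ _ _
      have e2 : ω (p x (p y z)) w = ω z ⁅y, ⁅x, w⁆⁆ := by
        rw [hp, hp]; ring
      have e3 : ω (p (p y x) z) w = -(ω z ⁅p y x, w⁆) := hp _ _ _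
      have e4 : ω (p y (p x z)) w = ω z ⁅x, ⁅y, w⁆⁆ := by
        rw [hp, hp]; ring
      have e5 : (⁅p x y, w⁆ : L) - ⁅p y x, w⁆ = ⁅⁅x, y⁆, w⁆ := by
        rw [← sub_lie, hcomm]
      have e6 : (⁅⁅x, y⁆, w⁆ : L) = ⁅x, ⁅y, w⁆⁆ - ⁅y, ⁅x, w⁆⁆ := lie_lie x y w
      have e7 : ω z ⁅p x y, w⁆ - ω z ⁅p y x, w⁆ = ω z ⁅x, ⁅y, w⁆⁆ - ω z ⁅y, ⁅x, w⁆⁆ := by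
        rw [← map_sub, e5, e6, map_sub]
      simp only [map_sub, LinearMap.sub_apply, LinearMap.zero_apply, e1, e2, e3, e4]
      linarith
    exact sub_eq_zero.mp (hnondeg _ h0)
  -- left symmetry of coad part
  have hcoad : ∀ (x y : L) (β : Module.Dual ℝ L),
      coad (p x y) β - coad x (coad y β) = coad (p y x) β - coad y (coad x β) := by
    intro x y β
    ext z
    have h5 : β ⁅p x y, z⁆ - β ⁅p y x, z⁆ = β ⁅⁅x, y⁆, z⁆ := by
      rw [← map_sub, ← sub_lie, hcomm]
    have e1 : coad (p x y) β z - coad (p y x) β z = -(β ⁅⁅x, y⁆, z⁆) := by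
      simp only [coad_apply]; linarith
    have e2 : coad x (coad y β) z = β ⁅y, ⁅x, z⁆⁆ := by
      rw [coad_apply, coad_apply, neg_neg]
    have e3 : coad y (coad x β) z = β ⁅x, ⁅y, z⁆⁆ := by
      rw [coad_apply, coad_apply, neg_neg]
    have e4 : β ⁅⁅x, y⁆, z⁆ = β ⁅x, ⁅y, z⁆⁆ - β ⁅y, ⁅x, z⁆⁆ := by
      rw [← map_sub, lie_lie]
    simp only [LinearMap.sub_apply, e2, e3]
    linarith
  constructor
  · intro u v w
    have h1 := hlsa u.1 v.1 w.1
    have h2 := hcoad u.1 v.1 w.2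
    simp only [sprod, Prod.mk_sub_mk, Prod.mk.injEq]
    exact ⟨h1, h2⟩
  · intro u v
    have h1 := hcomm u.1 v.1
    simp only [sprod, Prod.mk_sub_mk, Prod.mk.injEq]
    exact ⟨h1, trivial⟩
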